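/- arXiv:1503.02255 — 2 statements merged into one kernel-verified Lean document; each statement's English description precedes it below -/
import Mathlib

section
/- Let (M_i)_{i≥1} be nonnegative random variables on a probability space, let θ > 0, c₁ > 0, and (δ_i)_{i≥1} positive reals with ∑_i δ_i² log(e+δ_i^{-1}) = θ. Suppose for every i and every r > 0 with r²/θ ≥ 5, P(M_i ≥ δ_i √(r² log(e+δ_i^{-1})/θ)) ≤ c₁ exp(−r² log(e+δ_i^{-1})/(2θ)). Set λ̃ := inf_i log(e+δ_i^{-1})/(2θ). Then for every λ ∈ (0, λ̃) there is a constant c > 0 such that P(√(∑_i M_i²) ≥ r) ≤ c e^{-λ r²} for all r ≥ 0. -/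
open MeasureTheory

private lemma stmt13_key (θ lam tlam u r : ℝ) (hθ : 0 < θ) (hlam : 0 < lam)
    (hlt : lam < tlam) (hu : tlam ≤ u) (hr : 5 * θ * tlam / (tlam - lam) ≤ r ^ 2) :
    5 * θ * u ≤ r ^ 2 * (u - lam) := by
  have hd : 0 < tlam - lam := sub_pos.2 hlt
  have htp : 0 < tlam := lt_trans hlam hlt
  have hup : 0 < u := lt_of_lt_of_le htp hu
  rw [div_le_iff₀ hd] at hr
  have h1 : u * (tlam - lam) ≤ tlam * (u - lam) := by
    nlinarith [mul_nonneg hlam.le (sub_nonneg.2 hu)]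
  have h3 : 5 * θ * tlam * u ≤ r ^ 2 * (tlam - lam) * u :=
    mul_le_mul_of_nonneg_right hr hup.le
  have h4 : r ^ 2 * (u * (tlam - lam)) ≤ r ^ 2 * (tlam * (u - lam)) :=
    mul_le_mul_of_nonneg_left h1 (sq_nonneg r)
  have h5 : tlam * (5 * θ * u) ≤ tlam * (r ^ 2 * (u - lam)) := by nlinarith
  exact (mul_le_mul_iff_right₀ htp).mp h5

private lemma stmt13_exp2 (d : ℝ) (hd : 0 < d) :
    Real.exp (-(2 * Real.log (Real.exp 1 + d⁻¹))) ≤ d ^ 2 := by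
  have hx : 0 < Real.exp 1 + d⁻¹ := add_pos (Real.exp_pos 1) (inv_pos.2 hd)
  have hxl : Real.exp (Real.log (Real.exp 1 + d⁻¹)) = Real.exp 1 + d⁻¹ :=
    Real.exp_log hx
  have h2L : Real.exp (-(2 * Real.log (Real.exp 1 + d⁻¹)))
      = ((Real.exp 1 + d⁻¹) ^ 2)⁻¹ := by
    rw [Real.exp_neg, two_mul, Real.exp_add, hxl, sq]
  rw [h2L, inv_le_iff_one_le_mul₀ (by positivity)]
  have h1 : 1 ≤ d * (Real.exp 1 + d⁻¹) := by
    rw [mul_add, mul_inv_cancel₀ hd.ne']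
    nlinarith [Real.exp_pos 1]
  nlinarith

private lemma stmt13_final (a e1 e2 : ℝ) (ha : 0 ≤ a) (he1 : 1 ≤ e1) (he2 : 0 < e2) :
    a * e2 ≤ (a + 1) * e1 * e2 := by
  have h : (a + 1) * 1 * e2 ≤ (a + 1) * e1 * e2 :=
    mul_le_mul_of_nonneg_right
      (mul_le_mul_of_nonneg_left he1 (by linarith)) he2.le
  nlinarith

set_option maxHeartbeats 1000000 in
theorem stmt13 {Ω : Type*} [MeasurableSpace Ω] (P : Measure Ω) [IsProbabilityMeasure P]
    (M : ℕ → Ω → ℝ) (hMmeas : ∀ i, Measurable (M i)) (hM0 : ∀ i ω, 0 ≤ M i ω)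
    (θ c₁ : ℝ) (hθ : 0 < θ) (hc₁ : 0 < c₁)
    (δ : ℕ → ℝ) (hδ : ∀ i, 0 < δ i)
    (hθeq : (∑' i, δ i ^ 2 * Real.log (Real.exp 1 + (δ i)⁻¹)) = θ)
    (htail : ∀ i, ∀ r : ℝ, 0 < r → 5 ≤ r ^ 2 / θ →
      P {ω | δ i * Real.sqrt (r ^ 2 * Real.log (Real.exp 1 + (δ i)⁻¹) / θ) ≤ M i ω} ≤
        ENNReal.ofReal (c₁ * Real.exp (-(r ^ 2 * Real.log (Real.exp 1 + (δ i)⁻¹)) / (2 * θ)))) :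
    ∀ lam : ℝ, 0 < lam → lam < ⨅ i, Real.log (Real.exp 1 + (δ i)⁻¹) / (2 * θ) →
      ∃ c : ℝ, 0 < c ∧ ∀ r : ℝ, 0 ≤ r →
        P {ω | r ≤ Real.sqrt (∑' i, (M i ω) ^ 2)} ≤
          ENNReal.ofReal (c * Real.exp (-lam * r ^ 2)) := by
  intro lam hlam hlamlt
  set L : ℕ → ℝ := fun i => Real.log (Real.exp 1 + (δ i)⁻¹) with hLdef
  have hxpos : ∀ i, 0 < Real.exp 1 + (δ i)⁻¹ := fun i =>
    add_pos (Real.exp_pos 1) (inv_pos.2 (hδ i))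
  have hL1 : ∀ i, 1 ≤ L i := by
    intro i
    have : Real.exp 1 ≤ Real.exp 1 + (δ i)⁻¹ :=
      le_add_of_nonneg_right (inv_pos.2 (hδ i)).le
    calc (1 : ℝ) = Real.log (Real.exp 1) := (Real.log_exp 1).symm
      _ ≤ L i := Real.log_le_log (Real.exp_pos 1) this
  have hLpos : ∀ i, 0 < L i := fun i => lt_of_lt_of_le one_pos (hL1 i)
  set tlam : ℝ := ⨅ i, L i / (2 * θ) with htlamdef
  have hbdd : BddBelow (Set.range fun i => L i / (2 * θ)) := by
    refine ⟨0, ?_⟩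
    rintro x ⟨i, rfl⟩
    exact div_nonneg (le_trans zero_le_one (hL1 i)) (by positivity)
  have htlam_le : ∀ i, tlam ≤ L i / (2 * θ) := fun i => ciInf_le hbdd i
  have hlam_lt : lam < tlam := hlamlt
  have htlam_pos : 0 < tlam := lt_trans hlam hlam_lt
  have hd : 0 < tlam - lam := sub_pos.2 hlam_lt
  -- summability
  have hsumL : Summable (fun i => δ i ^ 2 * L i) := by
    by_contra h
    rw [tsum_eq_zero_of_not_summable h] at hθeq
    exact hθ.ne' hθeq.symm
  have hsumδ : Summable (fun i => δ i ^ 2) := by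
    refine hsumL.of_nonneg_of_le (fun i => sq_nonneg _) (fun i => ?_)
    exact le_mul_of_one_le_right (sq_nonneg _) (hL1 i)
  set S : ℝ := ∑' i, δ i ^ 2 with hSdef
  have hS0 : 0 ≤ S := tsum_nonneg (fun i => sq_nonneg _)
  set R : ℝ := 5 * θ * tlam / (tlam - lam) with hRdef
  have hR0 : 0 < R := by positivity
  have hRd : R * (tlam - lam) = 5 * θ * tlam := by
    rw [hRdef, div_mul_cancel₀ _ hd.ne']
  refine ⟨(c₁ * S + 1) * Real.exp (lam * R), by positivity, ?_⟩
  intro r hr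
  by_cases hrR : r ^ 2 ≤ R
  · -- small r: use P ≤ 1
    refine le_trans prob_le_one ?_
    rw [← ENNReal.ofReal_one]
    apply ENNReal.ofReal_le_ofReal
    have h1 : (1:ℝ) ≤ Real.exp (lam * R) * Real.exp (-lam * r ^ 2) := by
      rw [← Real.exp_add]
      refine Real.one_le_exp ?_
      nlinarith
    have h2 : (1:ℝ) ≤ c₁ * S + 1 := by nlinarith
    calc (1:ℝ) ≤ Real.exp (lam * R) * Real.exp (-lam * r ^ 2) := h1
      _ ≤ (c₁ * S + 1) * (Real.exp (lam * R) * Real.exp (-lam * r ^ 2)) := by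
          nlinarith [Real.exp_pos (lam * R), Real.exp_pos (-lam * r ^ 2)]
      _ = (c₁ * S + 1) * Real.exp (lam * R) * Real.exp (-lam * r ^ 2) := by ring
  · push_neg at hrR
    have hrpos : 0 < r := by
      rcases hr.lt_or_eq with h | h
      · exact h
      · exfalso; nlinarith
    have hr5 : 5 ≤ r ^ 2 / θ := by
      rw [le_div_iff₀ hθ]
      have : θ ≤ θ * (tlam / (tlam - lam)) := by
        rw [le_mul_iff_one_le_right hθ, le_div_iff₀ hd]
        nlinarith
      nlinarith [hRd]
    -- union bound subset
    have hsubset : {ω | r ≤ Real.sqrt (∑' i, (M i ω) ^ 2)} ⊆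
        ⋃ i, {ω | δ i * Real.sqrt (r ^ 2 * L i / θ) ≤ M i ω} := by
      intro ω hω
      simp only [Set.mem_setOf_eq] at hω
      by_contra hc
      simp only [Set.mem_iUnion, Set.mem_setOf_eq, not_exists, not_le] at hc
      set a : ℕ → ℝ := fun i => δ i * Real.sqrt (r ^ 2 * L i / θ) with hadef
      have ha2 : ∀ i, a i ^ 2 = r ^ 2 / θ * (δ i ^ 2 * L i) := by
        intro i
        have hnn : 0 ≤ r ^ 2 * L i / θ :=
          div_nonneg (mul_nonneg (sq_nonneg r) (hLpos i).le) hθ.le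
        rw [hadef, mul_pow, Real.sq_sqrt hnn]
        field_simp
      have hsa : Summable (fun i => a i ^ 2) := by
        have := hsumL.mul_left (r ^ 2 / θ)
        simpa [ha2] using this
      have hle : ∀ i, (M i ω) ^ 2 ≤ a i ^ 2 := fun i =>
        (pow_le_pow_left₀ (hM0 i ω) (hc i).le 2)
      have hlt : (M 0 ω) ^ 2 < a 0 ^ 2 := by
        have hc0 : M 0 ω < a 0 := hc 0
        have h0 : 0 < a 0 := lt_of_le_of_lt (hM0 0 ω) hc0
        nlinarith [hM0 0 ω, hc0, mul_pos (sub_pos.2 hc0)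
          (lt_of_lt_of_le h0 (le_add_of_nonneg_left (hM0 0 ω)))]
      have hsM : Summable (fun i => (M i ω) ^ 2) :=
        hsa.of_nonneg_of_le (fun i => sq_nonneg _) hle
      have hsum_a : (∑' i, a i ^ 2) = r ^ 2 := by
        have : (∑' i, a i ^ 2) = r ^ 2 / θ * ∑' i, δ i ^ 2 * L i := by
          simp only [ha2]; exact tsum_mul_left
        rw [this, hθeq]; field_simp
      have hstrict : (∑' i, (M i ω) ^ 2) < r ^ 2 := by
        rw [← hsum_a]
        exact Summable.tsum_lt_tsum hle hlt hsM hsa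
      have hge : r ^ 2 ≤ ∑' i, (M i ω) ^ 2 := by
        have h1 : r ^ 2 ≤ (Real.sqrt (∑' i, (M i ω) ^ 2)) ^ 2 :=
          pow_le_pow_left₀ hr hω 2
        rwa [Real.sq_sqrt (tsum_nonneg (fun i => sq_nonneg _))] at h1
      exact absurd hge (not_le.2 hstrict)
    refine le_trans (le_trans (measure_mono hsubset) (measure_iUnion_le _)) ?_
    have hterm : ∀ i, P {ω | δ i * Real.sqrt (r ^ 2 * L i / θ) ≤ M i ω} ≤
        ENNReal.ofReal (c₁ * δ i ^ 2 * Real.exp (-lam * r ^ 2)) := by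
      intro i
      refine le_trans (htail i r hrpos hr5) (ENNReal.ofReal_le_ofReal ?_)
      -- exponent inequality
      have hkey : 5 * θ * (L i / (2 * θ)) ≤ r ^ 2 * (L i / (2 * θ) - lam) :=
        stmt13_key θ lam tlam (L i / (2 * θ)) r hθ hlam hlam_lt (htlam_le i) hrR.le
      have hu2 : L i = 2 * θ * (L i / (2 * θ)) := by field_simp
      have hexp2 : Real.exp (-(2 * L i)) ≤ δ i ^ 2 := stmt13_exp2 (δ i) (hδ i)
      have hsplit : Real.exp (-(r ^ 2 * L i) / (2 * θ)) ≤
          δ i ^ 2 * Real.exp (-lam * r ^ 2) := by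
        have heq : -(r ^ 2 * L i) / (2 * θ) =
            -lam * r ^ 2 + -(r ^ 2 * (L i / (2 * θ) - lam)) := by
          field_simp; ring
        rw [heq, Real.exp_add, mul_comm]
        refine mul_le_mul_of_nonneg_right ?_ (Real.exp_pos _).le
        refine le_trans ?_ hexp2
        apply Real.exp_le_exp.2
        have : 2 * L i ≤ 5 * θ * (L i / (2 * θ)) := by
          rw [show 5 * θ * (L i / (2 * θ)) = 5 / 2 * L i by field_simp]
          nlinarith [hLpos i]
        nlinarith [hkey]
      calc c₁ * Real.exp (-(r ^ 2 * L i) / (2 * θ))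
          ≤ c₁ * (δ i ^ 2 * Real.exp (-lam * r ^ 2)) :=
            mul_le_mul_of_nonneg_left hsplit hc₁.le
        _ = c₁ * δ i ^ 2 * Real.exp (-lam * r ^ 2) := by ring
    refine le_trans (ENNReal.tsum_le_tsum hterm) ?_
    have hsumc : Summable (fun i => c₁ * δ i ^ 2 * Real.exp (-lam * r ^ 2)) := by
      have := (hsumδ.mul_left c₁).mul_right (Real.exp (-lam * r ^ 2))
      simpa [mul_assoc] using this
    rw [← ENNReal.ofReal_tsum_of_nonneg (fun i => by positivity) hsumc]
    apply ENNReal.ofReal_le_ofReal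
    have htsum : (∑' i, c₁ * δ i ^ 2 * Real.exp (-lam * r ^ 2)) =
        c₁ * S * Real.exp (-lam * r ^ 2) := by
      rw [hSdef]
      rw [show (fun i => c₁ * δ i ^ 2 * Real.exp (-lam * r ^ 2)) =
        (fun i => (c₁ * Real.exp (-lam * r ^ 2)) * δ i ^ 2) from funext fun i => by ring]
      rw [tsum_mul_left]; ring
    rw [htsum]
    have h1 : (1:ℝ) ≤ Real.exp (lam * R) := Real.one_le_exp (by positivity)
    exact stmt13_final (c₁ * S) _ _ (mul_nonneg hc₁.le hS0) h1 (Real.exp_pos _)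
end

section
/- Let (λ_j)_{j≥1} be positive reals, (a_j)_{j≥1} nonnegative reals, and δ ∈ (0,1) such that ∑_{j=1}^∞ a_j / λ_j^{1-δ} < ∞. Then for every ε ∈ (0, δ/(1-δ)], ∫₀¹ ( ∑_{j=1}^∞ e^{-2 λ_j t} a_j )^{1+ε} dt < ∞. -/
open MeasureTheory
open scoped ENNReal

lemma aux_exp_lint_le_one {B : ℝ} (hB : 0 < B) :
    (∫⁻ t in Set.Ioc (0:ℝ) 1, ENNReal.ofReal (Real.exp (-(B * t)))) ≤ 1 := by
  have h : ∀ t ∈ Set.Ioc (0:ℝ) 1, ENNReal.ofReal (Real.exp (-(B * t))) ≤ 1 := by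
    intro t ht
    rw [show (1:ℝ≥0∞) = ENNReal.ofReal 1 by simp]
    apply ENNReal.ofReal_le_ofReal
    rw [Real.exp_le_one_iff]
    nlinarith [ht.1]
  calc (∫⁻ t in Set.Ioc (0:ℝ) 1, ENNReal.ofReal (Real.exp (-(B * t))))
      ≤ ∫⁻ _ in Set.Ioc (0:ℝ) 1, 1 := setLIntegral_mono' measurableSet_Ioc h
    _ = volume (Set.Ioc (0:ℝ) 1) := setLIntegral_one _
    _ = 1 := by simp [Real.volume_Ioc]

lemma aux_exp_lint_le_inv {B : ℝ} (hB : 0 < B) :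
    (∫⁻ t in Set.Ioc (0:ℝ) 1, ENNReal.ofReal (Real.exp (-(B * t)))) ≤ ENNReal.ofReal (1 / B) := by
  have hint : IntegrableOn (fun t : ℝ => Real.exp (-(B * t))) (Set.Ioi 0) := by
    simpa [neg_mul] using exp_neg_integrableOn_Ioi 0 hB
  have hval : (∫ t in Set.Ioi (0:ℝ), Real.exp (-(B * t))) = 1 / B := by
    have h := MeasureTheory.integral_comp_mul_left_Ioi (fun y => Real.exp (-y)) 0 hB
    simp only [mul_zero] at h
    rw [h, integral_exp_neg_Ioi_zero]
    simp [one_div]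
  calc (∫⁻ t in Set.Ioc (0:ℝ) 1, ENNReal.ofReal (Real.exp (-(B * t))))
      ≤ ∫⁻ t in Set.Ioi (0:ℝ), ENNReal.ofReal (Real.exp (-(B * t))) :=
        lintegral_mono_set Set.Ioc_subset_Ioi_self
    _ = ENNReal.ofReal (∫ t in Set.Ioi (0:ℝ), Real.exp (-(B * t))) :=
        (ofReal_integral_eq_lintegral_ofReal hint
          (Filter.Eventually.of_forall fun t => (Real.exp_pos _).le)).symm
    _ = ENNReal.ofReal (1 / B) := by rw [hval]

theorem stmt15 (lam : ℕ → ℝ) (hlam : ∀ j, 0 < lam j)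
    (a : ℕ → ℝ) (ha : ∀ j, 0 ≤ a j) (dlt : ℝ) (hdlt0 : 0 < dlt) (hdlt1 : dlt < 1)
    (hsum : Summable (fun j => a j / lam j ^ (1 - dlt)))
    (ε : ℝ) (hε0 : 0 < ε) (hε1 : ε ≤ dlt / (1 - dlt)) :
    (∫⁻ t in Set.Ioc (0:ℝ) 1,
        (∑' j, ENNReal.ofReal (Real.exp (-2 * lam j * t) * a j)) ^ (1 + ε)) < ⊤ := by
  have h1d : (0:ℝ) < 1 - dlt := by linarith
  set q : ℝ := 1 + ε with hq
  have hq0 : 0 < q := by simp only [hq]; linarith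
  have hq1 : 1 < q := by simp only [hq]; linarith
  set p : ℝ := (1 + ε) / ε with hp
  have hpq : p.HolderConjugate q := by
    rw [Real.holderConjugate_iff]
    constructor
    · rw [hp, lt_div_iff₀ hε0]; linarith
    · rw [hp, hq]; field_simp; ring
  have hεd : ε * (1 - dlt) ≤ dlt := by
    rw [le_div_iff₀ h1d] at hε1; linarith
  have hP1 : (1 - dlt) * q ≤ 1 := by simp only [hq]; nlinarith
  have hPnn : 0 ≤ (1 - dlt) * q := by positivity
  set μf : ℕ → ℝ≥0∞ := fun j => ENNReal.ofReal (a j / lam j ^ (1 - dlt)) with hμf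
  have hμnn : ∀ j, 0 ≤ a j / lam j ^ (1 - dlt) :=
    fun j => div_nonneg (ha j) (Real.rpow_pos_of_pos (hlam j) _).le
  set S : ℝ≥0∞ := ∑' j, μf j with hS
  have hSne : S ≠ ⊤ := by
    rw [hS, hμf, ← ENNReal.ofReal_tsum_of_nonneg hμnn hsum]
    exact ENNReal.ofReal_ne_top
  set c : ℕ → ℝ → ℝ≥0∞ :=
    fun j t => ENNReal.ofReal (lam j ^ (1 - dlt) * Real.exp (-2 * lam j * t)) with hc
  set G : ℝ → ℝ≥0∞ := fun t => ∑' j, μf j * (c j t) ^ q with hG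
  -- Hölder pointwise
  have key : ∀ t : ℝ,
      (∑' j, ENNReal.ofReal (Real.exp (-2 * lam j * t) * a j)) ^ q ≤ S ^ ε * G t := by
    intro t
    have hfg : ∀ j, ENNReal.ofReal (Real.exp (-2 * lam j * t) * a j)
        = (μf j ^ (1/p)) * (μf j ^ (1/q) * c j t) := by
      intro j
      have h1 : μf j ^ (1/p) * (μf j ^ (1/q) * c j t) = μf j * c j t := by
        rw [← mul_assoc, ← ENNReal.rpow_add_of_nonneg _ _ (by positivity) (by positivity)]
        have h2 : 1/p + 1/q = 1 := by
          rw [one_div, one_div]; exact hpq.inv_add_inv_eq_one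
        rw [h2, ENNReal.rpow_one]
      rw [h1, hμf, hc, ← ENNReal.ofReal_mul (hμnn j)]
      congr 1
      have hne : lam j ^ (1 - dlt) ≠ 0 := (Real.rpow_pos_of_pos (hlam j) _).ne'
      field_simp
    have hH := ENNReal.lintegral_mul_le_Lp_mul_Lq Measure.count hpq
        (f := fun j => μf j ^ (1/p)) (g := fun j => μf j ^ (1/q) * c j t)
        ((measurable_of_countable _).aemeasurable) ((measurable_of_countable _).aemeasurable)
    simp only [lintegral_count] at hH
    have e2 : (∑' j, (μf j ^ (1/p)) ^ p) = S := by
      refine tsum_congr fun j => ?_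
      rw [← ENNReal.rpow_mul, one_div, inv_mul_cancel₀ hpq.ne_zero, ENNReal.rpow_one]
    have e3 : (∑' j, (μf j ^ (1/q) * c j t) ^ q) = G t := by
      refine tsum_congr fun j => ?_
      rw [ENNReal.mul_rpow_of_nonneg _ _ hq0.le, ← ENNReal.rpow_mul, one_div,
        inv_mul_cancel₀ hq0.ne', ENNReal.rpow_one]
    have hFle : (∑' j, ENNReal.ofReal (Real.exp (-2 * lam j * t) * a j))
        ≤ S ^ (1/p) * (G t) ^ (1/q) := by
      calc (∑' j, ENNReal.ofReal (Real.exp (-2 * lam j * t) * a j))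
          = ∑' j, ((fun j => μf j ^ (1/p)) * fun j => μf j ^ (1/q) * c j t) j :=
            tsum_congr fun j => by rw [Pi.mul_apply]; exact hfg j
        _ ≤ (∑' j, (μf j ^ (1/p)) ^ p) ^ (1/p) * (∑' j, (μf j ^ (1/q) * c j t) ^ q) ^ (1/q) := hH
        _ = S ^ (1/p) * (G t) ^ (1/q) := by rw [e2, e3]
    calc (∑' j, ENNReal.ofReal (Real.exp (-2 * lam j * t) * a j)) ^ q
        ≤ (S ^ (1/p) * (G t) ^ (1/q)) ^ q := ENNReal.rpow_le_rpow hFle hq0.le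
      _ = S ^ ε * G t := by
        rw [ENNReal.mul_rpow_of_nonneg _ _ hq0.le, ← ENNReal.rpow_mul, ← ENNReal.rpow_mul]
        congr 1
        · congr 1
          rw [hp, hq]
          field_simp
        · rw [one_div, inv_mul_cancel₀ hq0.ne', ENNReal.rpow_one]
  -- per-index integral bound
  have hterm : ∀ j, (∫⁻ t in Set.Ioc (0:ℝ) 1, μf j * (c j t) ^ q) ≤ μf j := by
    intro j
    have hB : (0:ℝ) < 2 * q * lam j := by nlinarith [hq0, hlam j]
    have hcq : ∀ t : ℝ, (c j t) ^ q
        = ENNReal.ofReal (lam j ^ ((1 - dlt) * q)) *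
          ENNReal.ofReal (Real.exp (-(2 * q * lam j * t))) := by
      intro t
      simp only [hc]
      rw [ENNReal.ofReal_rpow_of_nonneg
        (mul_nonneg (Real.rpow_pos_of_pos (hlam j) _).le (Real.exp_pos _).le) hq0.le]
      rw [← ENNReal.ofReal_mul (Real.rpow_nonneg (hlam j).le _)]
      congr 1
      rw [Real.mul_rpow (Real.rpow_pos_of_pos (hlam j) _).le (Real.exp_pos _).le,
        ← Real.rpow_mul (hlam j).le, ← Real.exp_mul]
      congr 1
      ring
    have hsplit : (∫⁻ t in Set.Ioc (0:ℝ) 1, μf j * (c j t) ^ q)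
        = μf j * (ENNReal.ofReal (lam j ^ ((1 - dlt) * q)) *
            ∫⁻ t in Set.Ioc (0:ℝ) 1, ENNReal.ofReal (Real.exp (-(2 * q * lam j * t)))) := by
      rw [← lintegral_const_mul' _ _ ENNReal.ofReal_ne_top,
        ← lintegral_const_mul' _ _ ENNReal.ofReal_ne_top]
      refine setLIntegral_congr_fun measurableSet_Ioc (fun t _ => ?_)
      rw [hcq t, mul_assoc]
    rw [hsplit]
    have hmain : ENNReal.ofReal (lam j ^ ((1 - dlt) * q)) *
        (∫⁻ t in Set.Ioc (0:ℝ) 1, ENNReal.ofReal (Real.exp (-(2 * q * lam j * t)))) ≤ 1 := by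
      rcases le_or_gt 1 (lam j) with hl | hl
      · calc ENNReal.ofReal (lam j ^ ((1 - dlt) * q)) *
            (∫⁻ t in Set.Ioc (0:ℝ) 1, ENNReal.ofReal (Real.exp (-(2 * q * lam j * t))))
            ≤ ENNReal.ofReal (lam j ^ ((1 - dlt) * q)) * ENNReal.ofReal (1 / (2 * q * lam j)) :=
              mul_le_mul_right (aux_exp_lint_le_inv hB) _
          _ = ENNReal.ofReal (lam j ^ ((1 - dlt) * q) * (1 / (2 * q * lam j))) :=
              (ENNReal.ofReal_mul (Real.rpow_nonneg (hlam j).le _)).symm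
          _ ≤ 1 := by
              rw [← ENNReal.ofReal_one]
              apply ENNReal.ofReal_le_ofReal
              have h1 : lam j ^ ((1 - dlt) * q) ≤ lam j := by
                calc lam j ^ ((1 - dlt) * q) ≤ lam j ^ (1:ℝ) :=
                      Real.rpow_le_rpow_of_exponent_le hl hP1
                  _ = lam j := Real.rpow_one _
              have h2 : 0 < 1 / (2 * q * lam j) := by positivity
              calc lam j ^ ((1 - dlt) * q) * (1 / (2 * q * lam j))
                  ≤ lam j * (1 / (2 * q * lam j)) := mul_le_mul_of_nonneg_right h1 h2.le
                _ = 1 / (2 * q) := by field_simp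
                _ ≤ 1 := by rw [div_le_one (by positivity)]; linarith
      · calc ENNReal.ofReal (lam j ^ ((1 - dlt) * q)) *
            (∫⁻ t in Set.Ioc (0:ℝ) 1, ENNReal.ofReal (Real.exp (-(2 * q * lam j * t))))
            ≤ ENNReal.ofReal (lam j ^ ((1 - dlt) * q)) * 1 :=
              mul_le_mul_right (aux_exp_lint_le_one hB) _
          _ ≤ 1 := by
              rw [mul_one, ← ENNReal.ofReal_one]
              exact ENNReal.ofReal_le_ofReal
                (Real.rpow_le_one (hlam j).le hl.le hPnn)
    calc μf j * (ENNReal.ofReal (lam j ^ ((1 - dlt) * q)) *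
          ∫⁻ t in Set.Ioc (0:ℝ) 1, ENNReal.ofReal (Real.exp (-(2 * q * lam j * t))))
        ≤ μf j * 1 := mul_le_mul_right hmain _
      _ = μf j := mul_one _
  -- assemble
  have hGmeas : ∀ j, Measurable (fun t : ℝ => μf j * (c j t) ^ q) := by
    intro j
    have hcont : Continuous fun t : ℝ => lam j ^ (1 - dlt) * Real.exp (-2 * lam j * t) := by
      fun_prop
    exact (ENNReal.continuous_rpow_const.measurable.comp
      hcont.measurable.ennreal_ofReal).const_mul _
  have hSεne : S ^ ε ≠ ⊤ := ENNReal.rpow_ne_top_of_nonneg hε0.le hSne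
  calc (∫⁻ t in Set.Ioc (0:ℝ) 1,
        (∑' j, ENNReal.ofReal (Real.exp (-2 * lam j * t) * a j)) ^ q)
      ≤ ∫⁻ t in Set.Ioc (0:ℝ) 1, S ^ ε * G t := lintegral_mono fun t => key t
    _ = S ^ ε * ∫⁻ t in Set.Ioc (0:ℝ) 1, G t := lintegral_const_mul' _ _ hSεne
    _ = S ^ ε * ∑' j, ∫⁻ t in Set.Ioc (0:ℝ) 1, μf j * (c j t) ^ q := by
        rw [hG, lintegral_tsum fun j => (hGmeas j).aemeasurable]
    _ ≤ S ^ ε * S := by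
        rw [hS]
        exact mul_le_mul_right (ENNReal.tsum_le_tsum hterm) _
    _ < ⊤ := ENNReal.mul_lt_top hSεne.lt_top hSne.lt_top
end
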